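/- arXiv:1506.04830 — 6 statements merged into one kernel-verified Lean document; each statement's English description precedes it below -/
import Mathlib

section
/- For every α > 2, the function h(β) = β^{2/α − 1}·(1+β)·ln(1+β) is strictly increasing on (0, ∞). -/
/-- For every α > 2, the function
h(β) = β^{2/α − 1}·(1+β)·ln(1+β) is strictly increasing on (0, ∞). -/
theorem h_strictMono
    (α : ℝ) (hα : 2 < α) :
    StrictMonoOn (fun β : ℝ => β ^ (2 / α - 1) * (1 + β) * Real.log (1 + β))
      (Set.Ioi 0) := by
  set c : ℝ := 2 / α - 1 with hcdef
  have hα0 : (0:ℝ) < α := by linarith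
  have hc1 : -1 < c := by
    have : 0 < 2 / α := by positivity
    simp only [hcdef]; linarith
  have hc0 : c < 0 := by
    have : 2 / α < 1 := (div_lt_one hα0).2 (by linarith)
    simp only [hcdef]; linarith
  apply strictMonoOn_of_deriv_pos (convex_Ioi 0)
  · apply ContinuousOn.mul
    · apply ContinuousOn.mul
      · exact fun x hx =>
          (Real.continuousAt_rpow_const x c (Or.inl (ne_of_gt hx))).continuousWithinAt
      · fun_prop
    · apply ContinuousOn.log
      · fun_prop
      · intro x hx
        have hx0 : (0:ℝ) < x := hx
        positivity
  · intro x hx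
    rw [interior_Ioi] at hx
    have hx0 : (0:ℝ) < x := hx
    have h1x : (0:ℝ) < 1 + x := by linarith
    have hd : HasDerivAt (fun β : ℝ => β ^ c * (1 + β) * Real.log (1 + β))
        (c * x ^ (c-1) * ((1 + x) * Real.log (1+x)) + x ^ c * (Real.log (1+x) + 1)) x := by
      have h1 : HasDerivAt (fun β : ℝ => β ^ c) (c * x ^ (c-1)) x :=
        Real.hasDerivAt_rpow_const (Or.inl hx0.ne')
      have ha : HasDerivAt (fun β : ℝ => 1 + β) 1 x := by
        simpa using (hasDerivAt_id x).const_add 1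
      have hb : HasDerivAt (fun β : ℝ => Real.log (1 + β)) (1 / (1 + x)) x := by
        exact ((Real.hasDerivAt_log h1x.ne').comp x ha).congr_deriv (by simp)
      have h2 : HasDerivAt (fun β : ℝ => (1 + β) * Real.log (1 + β))
          (Real.log (1+x) + 1) x := by
        have := ha.mul hb
        exact this.congr_deriv (by rw [one_div, mul_inv_cancel₀ h1x.ne']; ring)
      have heq : (fun β : ℝ => β ^ c * (1 + β) * Real.log (1 + β))
          = fun β : ℝ => β ^ c * ((1 + β) * Real.log (1 + β)) := by
        funext β; ring
      rw [heq]
      exact h1.mul h2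
    rw [hd.deriv]
    have hP : (0:ℝ) < x ^ (c-1) := Real.rpow_pos_of_pos hx0 _
    have hxc : x ^ c = x ^ (c-1) * x := by
      rw [← Real.rpow_add_one hx0.ne' (c-1)]; ring_nf
    set L := Real.log (1+x) with hL
    have hL0 : 0 < L := Real.log_pos (by linarith)
    have hLx : L ≤ x := by
      have := Real.log_le_sub_one_of_pos h1x
      linarith
    have key : 0 < c * (1 + x) * L + x * (L + 1) := by
      have hkey : c * (1 + x) * L + x * (L + 1) = x + L * ((1+c)*x + c) := by ring
      rw [hkey]
      rcases le_or_gt 0 ((1+c)*x + c) with hK | hK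
      · nlinarith
      · nlinarith [mul_le_mul_of_nonpos_right hLx hK.le,
          mul_pos (mul_pos hx0 h1x) (show (0:ℝ) < 1 + c by linarith)]
    calc (0:ℝ) < x ^ (c-1) * (c * (1 + x) * L + x * (L + 1)) := mul_pos hP key
      _ = c * x ^ (c-1) * ((1 + x) * L) + x ^ c * (L + 1) := by rw [hxc]; ring
end

section
/- For every α > 2 and every k > 0, the transcendental equation α·β = k·β^{2/α}·(1+β)·ln(1+β) has exactly one solution β > 0. -/
open Real Set

/-- For every α > 2 and every k > 0, the transcendental equation
α·β = k·β^{2/α}·(1+β)·ln(1+β) has exactly one solution β > 0. -/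
theorem transcendental_eq_unique_solution
    (α k : ℝ) (hα : 2 < α) (hk : 0 < k) :
    ∃! β : ℝ, 0 < β ∧ α * β = k * β ^ (2 / α) * (1 + β) * Real.log (1 + β) := by
  have hα0 : (0:ℝ) < α := by linarith
  set c : ℝ := 2 / α with hc
  have hc0 : 0 < c := by positivity
  have hc1 : c < 1 := by
    rw [hc, div_lt_one hα0]; linarith
  set h : ℝ → ℝ := fun x => x ^ (c - 1) * ((1 + x) * Real.log (1 + x)) with hh
  -- derivative of h
  have hderiv : ∀ x : ℝ, 0 < x →
      HasDerivAt h ((c-1) * x ^ (c-2) * ((1+x) * Real.log (1+x))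
        + x ^ (c-1) * (Real.log (1+x) + 1)) x := by
    intro x hx
    have h1 : HasDerivAt (fun x : ℝ => x ^ (c-1)) ((c-1) * x ^ (c-1-1)) x :=
      Real.hasDerivAt_rpow_const (Or.inl (ne_of_gt hx))
    have h2 : HasDerivAt (fun x : ℝ => (1 + x) * Real.log (1 + x))
        (Real.log (1+x) + 1) x := by
      have hne : (1:ℝ) + x ≠ 0 := by positivity
      have hl : HasDerivAt (fun x : ℝ => Real.log (1+x)) (1/(1+x)) x := by
        have := ((hasDerivAt_id' x).const_add 1).log hne
        simpa [one_div] using this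
      have := ((hasDerivAt_id x).const_add 1).mul hl
      exact this.congr_deriv (by rw [id_eq, mul_one_div_cancel hne, one_mul])
    have := h1.mul h2
    exact this.congr_deriv (by rw [show c - 1 - 1 = c - 2 by ring])
  -- positivity of the derivative
  have hpos : ∀ x : ℝ, 0 < x →
      0 < (c-1) * x ^ (c-2) * ((1+x) * Real.log (1+x))
        + x ^ (c-1) * (Real.log (1+x) + 1) := by
    intro x hx
    have h1x : (0:ℝ) < 1 + x := by linarith
    have hL : 0 < Real.log (1+x) := Real.log_pos (by linarith)
    have hLx : Real.log (1+x) ≤ x := by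
      have := Real.log_le_sub_one_of_pos h1x
      linarith
    have hx2 : (0:ℝ) < x ^ (c-2) := Real.rpow_pos_of_pos hx _
    have hxc1 : x ^ (c-1) = x ^ (c-2) * x := by
      rw [← Real.rpow_add_one (ne_of_gt hx)]
      ring_nf
    rw [hxc1]
    have key : 0 < (c-1) * ((1+x) * Real.log (1+x)) + x * (Real.log (1+x) + 1) := by
      nlinarith [mul_pos hx hL, mul_le_mul_of_nonneg_left hLx (by linarith : (0:ℝ) ≤ 1 - c),
        mul_pos h1x hL]
    calc (0:ℝ) = x ^ (c-2) * 0 := by ring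
    _ < x ^ (c-2) * ((c-1) * ((1+x) * Real.log (1+x)) + x * (Real.log (1+x) + 1)) := by
        exact mul_lt_mul_of_pos_left key hx2
    _ = (c-1) * x ^ (c-2) * ((1+x) * Real.log (1+x)) + x ^ (c-2) * x * (Real.log (1+x) + 1) := by
        ring
  -- strict monotonicity
  have hmono : StrictMonoOn h (Ioi 0) := by
    apply strictMonoOn_of_deriv_pos (convex_Ioi 0)
    · intro x hx
      exact (hderiv x hx).continuousAt.continuousWithinAt
    · intro x hx
      rw [interior_Ioi] at hx
      rw [(hderiv x hx).deriv]
      exact hpos x hx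
  -- equivalence of the equation with h β = α / k
  have hequiv : ∀ β : ℝ, 0 < β →
      ((α * β = k * β ^ (2 / α) * (1 + β) * Real.log (1 + β)) ↔ h β = α / k) := by
    intro β hβ
    have hrw : k * h β * β = k * β ^ (2 / α) * (1 + β) * Real.log (1 + β) := by
      have : β ^ (c - 1) * β = β ^ c := by
        rw [← Real.rpow_add_one (ne_of_gt hβ)]; ring_nf
      rw [hh]
      simp only []
      rw [hc] at this ⊢
      linear_combination (k * (1 + β) * Real.log (1 + β)) * this
    constructor
    · intro heq
      rw [← hrw] at heq
      have : α = k * h β := by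
        have := mul_right_cancel₀ (ne_of_gt hβ) heq
        linarith
      rw [this]
      field_simp
    · intro heq
      rw [← hrw, heq]
      field_simp
  -- choose endpoints
  have hc_ne : c ≠ 0 := ne_of_gt hc0
  set a : ℝ := min 1 ((α/(2*k)) ^ (1/c)) with ha
  have hαk : (0:ℝ) < α/(2*k) := by positivity
  have ha0 : 0 < a := lt_min one_pos (Real.rpow_pos_of_pos hαk _)
  have ha1 : a ≤ 1 := min_le_left _ _
  have hac : a ^ c ≤ α/(2*k) := by
    calc a ^ c ≤ ((α/(2*k)) ^ (1/c)) ^ c :=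
          Real.rpow_le_rpow (le_of_lt ha0) (min_le_right _ _) (le_of_lt hc0)
    _ = (α/(2*k)) ^ ((1/c) * c) := by rw [← Real.rpow_mul (le_of_lt hαk)]
    _ = α/(2*k) := by rw [one_div, inv_mul_cancel₀ hc_ne, Real.rpow_one]
  have hha : h a ≤ α / k := by
    have h1a : (0:ℝ) < 1 + a := by linarith
    have hLa : Real.log (1+a) ≤ a := by
      have := Real.log_le_sub_one_of_pos h1a; linarith
    have hLa0 : 0 ≤ Real.log (1+a) := Real.log_nonneg (by linarith)
    have hap : 0 < a ^ (c-1) := Real.rpow_pos_of_pos ha0 _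
    have step1 : h a ≤ a ^ (c-1) * ((1+a) * a) := by
      rw [hh]
      simp only []
      apply mul_le_mul_of_nonneg_left _ (le_of_lt hap)
      exact mul_le_mul_of_nonneg_left hLa (le_of_lt h1a)
    have step2 : a ^ (c-1) * ((1+a) * a) = a ^ c * (1+a) := by
      rw [show a ^ (c-1) * ((1+a) * a) = a ^ (c-1) * a * (1+a) by ring,
        ← Real.rpow_add_one (ne_of_gt ha0)]
      ring_nf
    have step3 : a ^ c * (1+a) ≤ (α/(2*k)) * 2 := by
      have h2 : (1:ℝ) + a ≤ 2 := by linarith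
      have := mul_le_mul hac h2 (by linarith) (le_of_lt hαk)
      linarith
    have : (α/(2*k)) * 2 = α / k := by field_simp
    linarith [step1, step2 ▸ step1]
  set b : ℝ := Real.exp (α/k + 1) with hb
  have hb1 : (1:ℝ) < b := by
    rw [hb]
    calc (1:ℝ) = Real.exp 0 := Real.exp_zero.symm
    _ < Real.exp (α/k + 1) := Real.exp_lt_exp.mpr (by positivity)
  have hb0 : 0 < b := by linarith
  have hhb : α / k ≤ h b := by
    have h1b : (0:ℝ) < 1 + b := by linarith
    have hLb : α/k + 1 ≤ Real.log (1+b) := by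
      calc α/k + 1 = Real.log b := by rw [hb, Real.log_exp]
      _ ≤ Real.log (1+b) := Real.log_le_log hb0 (by linarith)
    have hbc : (1:ℝ) ≤ b ^ c := Real.one_le_rpow (le_of_lt hb1) (le_of_lt hc0)
    have step1 : b ^ c * Real.log (1+b) ≤ h b := by
      rw [hh]
      simp only []
      have : b ^ c = b ^ (c-1) * b := by
        rw [← Real.rpow_add_one (ne_of_gt hb0)]; ring_nf
      rw [this]
      have hLb0 : 0 ≤ Real.log (1+b) := Real.log_nonneg (by linarith)
      have hbp : 0 ≤ b ^ (c-1) := le_of_lt (Real.rpow_pos_of_pos hb0 _)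
      nlinarith [Real.rpow_pos_of_pos hb0 (c-1)]
    have step2 : α / k ≤ b ^ c * Real.log (1+b) := by
      have hLb0 : (0:ℝ) ≤ α/k + 1 := by positivity
      calc α / k ≤ α/k + 1 := by linarith
      _ ≤ Real.log (1+b) := hLb
      _ = 1 * Real.log (1+b) := (one_mul _).symm
      _ ≤ b ^ c * Real.log (1+b) := by
          apply mul_le_mul_of_nonneg_right hbc; linarith
    linarith
  have hab : a ≤ b := le_trans ha1 (le_of_lt hb1)
  -- IVT
  have hcont : ContinuousOn h (Icc a b) := by
    intro x hx
    have hx0 : 0 < x := lt_of_lt_of_le ha0 hx.1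
    exact (hderiv x hx0).continuousAt.continuousWithinAt
  have hIVT := intermediate_value_Icc hab hcont
  have hmem : α / k ∈ Icc (h a) (h b) := ⟨hha, hhb⟩
  obtain ⟨β, hβmem, hβeq⟩ := hIVT hmem
  have hβ0 : 0 < β := lt_of_lt_of_le ha0 hβmem.1
  refine ⟨β, ⟨hβ0, (hequiv β hβ0).mpr hβeq⟩, ?_⟩
  rintro γ ⟨hγ0, hγeq⟩
  have h1 : h γ = α / k := (hequiv γ hγ0).mp hγeq
  exact hmono.injOn (mem_Ioi.mpr hγ0) (mem_Ioi.mpr hβ0) (h1.trans hβeq.symm)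
end

section
/- Fix W_s > 0 and set c = λ·κ·π·d²·(W_p/W_s)^{2/α}, and let β_un > 0 be the unique solution of α·β = 2c·β^{2/α}·(1+β)·ln(1+β). Then the function β ↦ T(W_s, β) = log₂(1+β)·exp(−c·β^{2/α}) is strictly increasing on (0, β_un] and strictly decreasing on [β_un, ∞). -/
/-- Fix W_s > 0, set c = λ·κ·π·d²·(W_p/W_s)^{2/α}, and let β_un > 0 be the
unique solution of α·β = 2c·β^{2/α}·(1+β)·ln(1+β). Then β ↦ T(W_s, β) = log₂(1+β)·exp(−c·β^{2/α})
is strictly increasing on (0, β_un] and strictly decreasing on [β_un, ∞). -/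
theorem throughput_mono_anti_around_critical_point
    (α lam κ d Wp Ws c βun : ℝ)
    (hα : 2 < α) (hlam : 0 < lam) (hd : 0 < d) (hWp : 0 < Wp) (hWs : 0 < Ws)
    (hκ : κ = Real.Gamma (1 + 2 / α) * Real.Gamma (1 - 2 / α))
    (hc : c = lam * κ * Real.pi * d ^ 2 * (Wp / Ws) ^ (2 / α))
    (hβun : 0 < βun)
    (heq : α * βun = 2 * c * βun ^ (2 / α) * (1 + βun) * Real.log (1 + βun)) :
    StrictMonoOn (fun β : ℝ => Real.logb 2 (1 + β) * Real.exp (-(c * β ^ (2 / α))))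
      (Set.Ioc 0 βun) ∧
    StrictAntiOn (fun β : ℝ => Real.logb 2 (1 + β) * Real.exp (-(c * β ^ (2 / α))))
      (Set.Ici βun) := by
  have hα0 : (0:ℝ) < α := lt_trans two_pos hα
  set p : ℝ := 2 / α with hpdef
  have hp0 : 0 < p := div_pos two_pos hα0
  have hp1 : p < 1 := (div_lt_one hα0).2 (by linarith)
  have hκ0 : 0 < κ := by
    rw [hκ]
    have h1 : (0:ℝ) < 1 + 2 / α := by positivity
    have h2 : (0:ℝ) < 1 - 2 / α := by
      have : 2 / α < 1 := hp1
      linarith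
    exact mul_pos (Real.Gamma_pos_of_pos h1) (Real.Gamma_pos_of_pos h2)
  have hc0 : 0 < c := by
    rw [hc]
    have h : (0:ℝ) < (Wp / Ws) ^ (2 / α) := Real.rpow_pos_of_pos (div_pos hWp hWs) _
    positivity
  have hlog2 : (0:ℝ) < Real.log 2 := Real.log_pos one_lt_two
  set q : ℝ → ℝ := fun x => (1 + x) * Real.log (1 + x) / x with hq
  have hqderiv : ∀ x ∈ Set.Ioi (0:ℝ), HasDerivAt q ((x - Real.log (1 + x)) / x ^ 2) x := by
    intro x hx
    have hx0 : (0:ℝ) < x := hx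
    have h1x : (0:ℝ) < 1 + x := by linarith
    have hlog : HasDerivAt (fun y : ℝ => Real.log (1 + y)) (1 / (1 + x)) x := by
      simpa [Function.comp_def] using (Real.hasDerivAt_log h1x.ne').comp x ((hasDerivAt_id x).const_add 1)
    have hnum : HasDerivAt (fun y : ℝ => (1 + y) * Real.log (1 + y))
        (Real.log (1 + x) + 1) x := by
      have h := ((hasDerivAt_id x).const_add 1).mul hlog
      refine h.congr_deriv (Eq.symm ?_)
      simp only [id_eq]
      field_simp
    have h := hnum.div (hasDerivAt_id x) hx0.ne'
    refine h.congr_deriv (Eq.symm ?_)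
    simp only [id_eq]
    field_simp
    ring
  have hqmono : StrictMonoOn q (Set.Ioi 0) := by
    apply strictMonoOn_of_deriv_pos (convex_Ioi 0)
    · intro x hx
      exact ((hqderiv x hx).continuousAt).continuousWithinAt
    · intro x hx
      rw [interior_Ioi] at hx
      rw [(hqderiv x hx).deriv]
      have hx0 : (0:ℝ) < x := hx
      have hlt : Real.log (1 + x) < x := by
        have := Real.log_lt_sub_one_of_pos (by linarith : (0:ℝ) < 1 + x) (by linarith)
        linarith
      exact div_pos (by linarith) (by positivity)
  set K : ℝ → ℝ := fun x => c * p * x ^ (p - 1) * ((1 + x) * Real.log (1 + x)) with hK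
  have hKeq : ∀ x : ℝ, 0 < x → K x = c * p * (x ^ p * q x) := by
    intro x hx
    simp only [hK, hq]
    rw [Real.rpow_sub hx, Real.rpow_one]
    field_simp
  have hKmono : StrictMonoOn K (Set.Ioi 0) := by
    intro x hx y hy hxy
    have hx0 : (0:ℝ) < x := hx
    have hy0 : (0:ℝ) < y := hy
    rw [hKeq x hx0, hKeq y hy0]
    have h1 : x ^ p < y ^ p := Real.rpow_lt_rpow hx0.le hxy hp0
    have h2 : q x < q y := hqmono hx hy hxy
    have hq0 : 0 ≤ q x := by
      apply div_nonneg _ hx0.le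
      have hln : (0:ℝ) ≤ Real.log (1 + x) := Real.log_nonneg (by linarith)
      nlinarith
    have h3 := mul_lt_mul'' h1 h2 (Real.rpow_nonneg hx0.le p) hq0
    nlinarith [mul_pos hc0 hp0]
  have hKβ : K βun = 1 := by
    simp only [hK]
    rw [Real.rpow_sub hβun, Real.rpow_one, hpdef]
    have h1 : (0:ℝ) < 1 + βun := by linarith
    field_simp
    linarith [heq]
  set f : ℝ → ℝ := fun β => Real.logb 2 (1 + β) * Real.exp (-(c * β ^ p)) with hf
  have hfderiv : ∀ x ∈ Set.Ioi (0:ℝ), HasDerivAt f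
      (Real.exp (-(c * x ^ p)) / Real.log 2 * ((1 - K x) / (1 + x))) x := by
    intro x hx
    have hx0 : (0:ℝ) < x := hx
    have h1x : (0:ℝ) < 1 + x := by linarith
    have hlog : HasDerivAt (fun y : ℝ => Real.log (1 + y)) (1 / (1 + x)) x := by
      simpa [Function.comp_def] using (Real.hasDerivAt_log h1x.ne').comp x ((hasDerivAt_id x).const_add 1)
    have hlogb : HasDerivAt (fun y : ℝ => Real.logb 2 (1 + y)) (1 / (1 + x) / Real.log 2) x := by
      simp only [Real.logb]
      exact hlog.div_const _
    have hrpow : HasDerivAt (fun y : ℝ => y ^ p) (p * x ^ (p - 1)) x :=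
      Real.hasDerivAt_rpow_const (Or.inl hx0.ne')
    have hexp : HasDerivAt (fun y : ℝ => Real.exp (-(c * y ^ p)))
        (Real.exp (-(c * x ^ p)) * (-(c * (p * x ^ (p - 1))))) x :=
      ((hrpow.const_mul c).neg).exp
    have h := hlogb.mul hexp
    refine h.congr_deriv (Eq.symm ?_)
    simp only [hK, Real.logb]
    field_simp
    ring
  constructor
  · apply strictMonoOn_of_deriv_pos (convex_Ioc 0 βun)
    · intro x hx
      exact ((hfderiv x hx.1).continuousAt).continuousWithinAt
    · intro x hx
      rw [interior_Ioc] at hx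
      rw [(hfderiv x hx.1).deriv]
      have hKx : K x < 1 := by
        rw [← hKβ]
        exact hKmono hx.1 (Set.mem_Ioi.2 hβun) hx.2
      have h1x : (0:ℝ) < 1 + x := by linarith [hx.1]
      exact mul_pos (div_pos (Real.exp_pos _) hlog2) (div_pos (by linarith) h1x)
  · apply strictAntiOn_of_deriv_neg (convex_Ici βun)
    · intro x hx
      exact ((hfderiv x (lt_of_lt_of_le hβun hx)).continuousAt).continuousWithinAt
    · intro x hx
      rw [interior_Ici] at hx
      have hx0 : (0:ℝ) < x := lt_trans hβun hx
      rw [(hfderiv x hx0).deriv]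
      have hKx : 1 < K x := by
        rw [← hKβ]
        exact hKmono (Set.mem_Ioi.2 hβun) (Set.mem_Ioi.2 hx0) hx
      have h1x : (0:ℝ) < 1 + x := by linarith
      exact mul_neg_of_pos_of_neg (div_pos (Real.exp_pos _) hlog2)
        (div_neg_of_neg_of_pos (by linarith) h1x)
end

section
/- Fix W_s > 0 and set k = 2·λ·κ·π·d²·(W_p/W_s)^{2/α}. If β > 0 satisfies the critical-point equation α·β = k·β^{2/α}·(1+β)·ln(1+β), then the success probability at β equals P_suc(W_s, β) = exp(−α·β / (2·(1+β)·ln(1+β))); equivalently, the outage probability at β equals 1 − exp(−α·β / (2·(1+β)·ln(1+β))). -/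
/-- Fix W_s > 0 and set k = 2·λ·κ·π·d²·(W_p/W_s)^{2/α}. If β > 0 satisfies
the critical-point equation α·β = k·β^{2/α}·(1+β)·ln(1+β), then the success probability at β
equals exp(−α·β / (2·(1+β)·ln(1+β))); equivalently, the outage probability at β equals
1 − exp(−α·β / (2·(1+β)·ln(1+β))). -/
theorem success_prob_at_critical_point
    (α lam κ d Wp Ws k β : ℝ)
    (hα : 2 < α) (hlam : 0 < lam) (hd : 0 < d) (hWp : 0 < Wp) (hWs : 0 < Ws) (hβ : 0 < β)
    (hκ : κ = Real.Gamma (1 + 2 / α) * Real.Gamma (1 - 2 / α))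
    (hk : k = 2 * (lam * κ * Real.pi * d ^ 2 * (Wp / Ws) ^ (2 / α)))
    (heq : α * β = k * β ^ (2 / α) * (1 + β) * Real.log (1 + β)) :
    Real.exp (-(lam * κ * Real.pi * d ^ 2 * β ^ (2 / α) * (Wp / Ws) ^ (2 / α))) =
      Real.exp (-(α * β / (2 * (1 + β) * Real.log (1 + β)))) ∧
    1 - Real.exp (-(lam * κ * Real.pi * d ^ 2 * β ^ (2 / α) * (Wp / Ws) ^ (2 / α))) =
      1 - Real.exp (-(α * β / (2 * (1 + β) * Real.log (1 + β)))) := by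
  have hlog : Real.log (1 + β) ≠ 0 :=
    ne_of_gt (Real.log_pos (by linarith))
  have h1β : (1 : ℝ) + β ≠ 0 := by positivity
  have key : lam * κ * Real.pi * d ^ 2 * β ^ (2 / α) * (Wp / Ws) ^ (2 / α) =
      α * β / (2 * (1 + β) * Real.log (1 + β)) := by
    subst hk
    field_simp
    linarith [heq]
  constructor <;> rw [key]
end

section
/- Fix W_s > 0, set k = 2·λ·κ·π·d²·(W_p/W_s)^{2/α}, let β_un > 0 be the unique solution of α·β = k·β^{2/α}·(1+β)·ln(1+β), and let ε ∈ (0, 1). If 1 − exp(−α·β_un / (2·(1+β_un)·ln(1+β_un))) > ε, then every β > 0 satisfying the outage constraint 1 − P_suc(W_s, β) ≤ ε satisfies β < β_un. -/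
/-- Fix W_s > 0, set k = 2·λ·κ·π·d²·(W_p/W_s)^{2/α}, let β_un > 0 be the
unique solution of α·β = k·β^{2/α}·(1+β)·ln(1+β), and let ε ∈ (0, 1). If
1 − exp(−α·β_un / (2·(1+β_un)·ln(1+β_un))) > ε, then every β > 0 satisfying the outage
constraint 1 − P_suc(W_s, β) ≤ ε satisfies β < β_un. -/
theorem constrained_beta_lt_unconstrained
    (α lam κ d Wp Ws k βun ε : ℝ)
    (hα : 2 < α) (hlam : 0 < lam) (hd : 0 < d) (hWp : 0 < Wp) (hWs : 0 < Ws)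
    (hκ : κ = Real.Gamma (1 + 2 / α) * Real.Gamma (1 - 2 / α))
    (hk : k = 2 * (lam * κ * Real.pi * d ^ 2 * (Wp / Ws) ^ (2 / α)))
    (hβun : 0 < βun)
    (heq : α * βun = k * βun ^ (2 / α) * (1 + βun) * Real.log (1 + βun))
    (hε : ε ∈ Set.Ioo (0 : ℝ) 1)
    (hout : 1 - Real.exp (-(α * βun / (2 * (1 + βun) * Real.log (1 + βun)))) > ε) :
    ∀ β : ℝ, 0 < β →
      1 - Real.exp (-(lam * κ * Real.pi * d ^ 2 * β ^ (2 / α) * (Wp / Ws) ^ (2 / α))) ≤ ε →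
      β < βun := by
  intro β hβ hβout
  have hα0 : (0:ℝ) < α := by linarith
  have hκpos : 0 < κ := by
    rw [hκ]
    have h1 : (0:ℝ) < 1 + 2 / α := by positivity
    have h2 : (0:ℝ) < 1 - 2 / α := by
      have : 2 / α < 1 := (div_lt_one hα0).mpr (by linarith)
      linarith
    exact mul_pos (Real.Gamma_pos_of_pos h1) (Real.Gamma_pos_of_pos h2)
  have hWpos : (0:ℝ) < (Wp / Ws) ^ (2 / α) :=
    Real.rpow_pos_of_pos (div_pos hWp hWs) _
  set C := lam * κ * Real.pi * d ^ 2 * (Wp / Ws) ^ (2 / α) with hC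
  have hCpos : 0 < C := by
    have := Real.pi_pos
    positivity
  have hL : 0 < Real.log (1 + βun) := Real.log_pos (by linarith)
  have h1βun : (0:ℝ) < 1 + βun := by linarith
  -- rewrite hout
  have hkey : α * βun / (2 * (1 + βun) * Real.log (1 + βun)) = C * βun ^ (2 / α) := by
    rw [heq, hk]
    field_simp
  rw [hkey] at hout
  -- combine
  have h1 : Real.exp (-(C * β ^ (2 / α))) < Real.exp (-(C * βun ^ (2 / α))) → False := by
    intro h
    have : C * βun ^ (2 / α) < C * β ^ (2 / α) := by
      have := Real.exp_lt_exp.mp h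
      linarith
    have hle : βun ^ (2 / α) < β ^ (2 / α) := lt_of_mul_lt_mul_left this hCpos.le
    -- from hout and hβout: exp(-Cβ) ≥ 1-ε > exp(-Cβun)
    have : Real.exp (-(C * βun ^ (2 / α))) < Real.exp (-(C * β ^ (2 / α))) := by
      have hA : Real.exp (-(C * βun ^ (2 / α))) < 1 - ε := by linarith
      have hB : 1 - ε ≤ Real.exp (-(C * β ^ (2 / α))) := by
        have : lam * κ * Real.pi * d ^ 2 * β ^ (2 / α) * (Wp / Ws) ^ (2 / α)
            = C * β ^ (2 / α) := by rw [hC]; ring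
        rw [this] at hβout
        linarith
      linarith
    linarith [Real.exp_lt_exp.mp h, Real.exp_lt_exp.mp this]
  have hA : Real.exp (-(C * βun ^ (2 / α))) < 1 - ε := by linarith
  have hB : 1 - ε ≤ Real.exp (-(C * β ^ (2 / α))) := by
    have heq2 : lam * κ * Real.pi * d ^ 2 * β ^ (2 / α) * (Wp / Ws) ^ (2 / α)
        = C * β ^ (2 / α) := by rw [hC]; ring
    rw [heq2] at hβout
    linarith
  have hlt : Real.exp (-(C * βun ^ (2 / α))) < Real.exp (-(C * β ^ (2 / α))) := by linarith
  have h2 : C * β ^ (2 / α) < C * βun ^ (2 / α) := by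
    have := Real.exp_lt_exp.mp hlt
    linarith
  have h3 : β ^ (2 / α) < βun ^ (2 / α) := lt_of_mul_lt_mul_left h2 hCpos.le
  by_contra hcon
  push_neg at hcon
  have : βun ^ (2 / α) ≤ β ^ (2 / α) :=
    Real.rpow_le_rpow hβun.le hcon (by positivity)
  linarith
end

section
/- Let W_max >庶 0 and ε ∈ (0, 1). Set k_max = 2·λ·κ·π·d²·(W_p/W_max)^{2/α}, let β_un > 0 be the unique solution of α·β = k_max·β^{2/α}·(1+β)·ln(1+β), and assume 1 − exp(−α·β_un / (2·(1+β_un)·ln(1+β_un))) > ε. Set β* = (W_max/W_p)·(−ln(1−ε)/(λ·κ·π·d²))^{α/2}. Then for every pair (W_s, β) with 0 < W_s ≤ W_max, β > 0, and 1 − P_suc(W_s, β) ≤ ε, one has T(W_s, β) ≤ T(W_max, β*) = (1−ε)·log₂(1 + β*); i.e., (W_max, β*) maximizes the link throughput subject to the power and outage constraints. -/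
/-- `t ↦ (1+t)·log(1+t)/t` is strictly increasing on `(0,∞)`. -/
lemma umono : StrictMonoOn (fun t : ℝ => (1 + t) * Real.log (1 + t) / t) (Set.Ioi 0) := by
  have hderiv : ∀ t : ℝ, 0 < t →
      HasDerivAt (fun t : ℝ => (1 + t) * Real.log (1 + t) / t)
        ((t - Real.log (1 + t)) / t ^ 2) t := by
    intro t ht
    have h1t : (0:ℝ) < 1 + t := by linarith
    have hlog : HasDerivAt (fun t : ℝ => Real.log (1 + t)) (1 / (1 + t)) t := by
      have := (Real.hasDerivAt_log h1t.ne').comp t ((hasDerivAt_id t).const_add 1)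
      simpa [Function.comp_def] using this
    have hmul : HasDerivAt (fun t : ℝ => (1 + t) * Real.log (1 + t))
        (1 * Real.log (1 + t) + (1 + t) * (1 / (1 + t))) t :=
      ((hasDerivAt_id t).const_add 1).mul hlog
    have := hmul.div (hasDerivAt_id t) ht.ne'
    convert this using 1
    · rfl
    · rfl
    · rfl
    · simp only [id]
      field_simp
      ring
  refine strictMonoOn_of_deriv_pos (convex_Ioi 0) ?_ ?_
  · intro t ht
    exact ((hderiv t ht).continuousAt).continuousWithinAt
  · intro t ht
    rw [interior_Ioi] at ht
    have ht' : (0:ℝ) < t := ht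
    rw [(hderiv t ht').deriv]
    have hlt : Real.log (1 + t) < t := by
      have h1 : (1:ℝ) + t ≠ 1 := by intro h; nlinarith
      have := Real.log_lt_sub_one_of_pos (x := 1 + t) (by linarith) h1
      linarith
    have : 0 < t - Real.log (1 + t) := by linarith
    positivity

/-- The function `t ↦ log(log(1+t)) - k·t^(2/α)` is monotone on `(0, βun]` when `βun` is the
critical point. -/
lemma Fmono (α k βun : ℝ) (hα : 2 < α) (hk : 0 < k) (hβun : 0 < βun)
    (heq : α * βun = 2 * k * βun ^ (2 / α) * (1 + βun) * Real.log (1 + βun)) :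
    StrictMonoOn (fun t : ℝ => Real.log (Real.log (1 + t)) - k * t ^ (2 / α))
      (Set.Ioc 0 βun) := by
  have hα0 : (0:ℝ) < α := by linarith
  have hderiv : ∀ t : ℝ, 0 < t →
      HasDerivAt (fun t : ℝ => Real.log (Real.log (1 + t)) - k * t ^ (2 / α))
        (1 / ((1 + t) * Real.log (1 + t)) - k * (2 / α * t ^ (2 / α - 1))) t := by
    intro t ht
    have h1t : (0:ℝ) < 1 + t := by linarith
    have hL : 0 < Real.log (1 + t) := Real.log_pos (by linarith)
    have hlog : HasDerivAt (fun t : ℝ => Real.log (1 + t)) (1 / (1 + t)) t := by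
      have := (Real.hasDerivAt_log h1t.ne').comp t ((hasDerivAt_id t).const_add 1)
      simpa [Function.comp_def] using this
    have hll : HasDerivAt (fun t : ℝ => Real.log (Real.log (1 + t)))
        (1 / Real.log (1 + t) * (1 / (1 + t))) t := by
      have := (Real.hasDerivAt_log hL.ne').comp t hlog
      simpa [Function.comp_def] using this
    have hr : HasDerivAt (fun t : ℝ => k * t ^ (2 / α))
        (k * (2 / α * t ^ (2 / α - 1))) t :=
      (Real.hasDerivAt_rpow_const (Or.inl ht.ne')).const_mul k
    have := hll.sub hr
    convert this using 1
    · rfl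
    · rfl
    · rfl
    · field_simp
  refine strictMonoOn_of_deriv_pos (convex_Ioc 0 βun) ?_ ?_
  · intro t ht
    exact ((hderiv t ht.1).continuousAt).continuousWithinAt
  · intro t ht
    rw [interior_Ioc] at ht
    obtain ⟨ht0, htu⟩ := ht
    have h1t : (0:ℝ) < 1 + t := by linarith
    have hL : 0 < Real.log (1 + t) := Real.log_pos (by linarith)
    have hLu : 0 < Real.log (1 + βun) := Real.log_pos (by linarith)
    rw [(hderiv t ht0).deriv]
    -- key inequality: 2·k·t^(2/α)·(1+t)·log(1+t) < α·t
    have hmono := umono (Set.mem_Ioi.mpr ht0) (Set.mem_Ioi.mpr hβun) htu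
    simp only at hmono
    have hcross : (1 + t) * Real.log (1 + t) * βun < (1 + βun) * Real.log (1 + βun) * t := by
      rw [div_lt_div_iff₀ ht0 hβun] at hmono
      linarith
    have hB : t ^ (2 / α) < βun ^ (2 / α) :=
      Real.rpow_lt_rpow ht0.le htu (by positivity)
    have hBpos : 0 < t ^ (2 / α) := Real.rpow_pos_of_pos ht0 _
    have hBupos : 0 < βun ^ (2 / α) := Real.rpow_pos_of_pos hβun _
    have hprod : t ^ (2 / α) * ((1 + t) * Real.log (1 + t) * βun)
        < βun ^ (2 / α) * ((1 + βun) * Real.log (1 + βun) * t) :=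
      mul_lt_mul'' hB hcross hBpos.le (by positivity)
    have hkey : 2 * k * t ^ (2 / α) * (1 + t) * Real.log (1 + t) < α * t := by
      have h2 : 2 * k * (t ^ (2 / α) * ((1 + t) * Real.log (1 + t) * βun))
          < 2 * k * (βun ^ (2 / α) * ((1 + βun) * Real.log (1 + βun) * t)) := by
        exact mul_lt_mul_of_pos_left hprod (by positivity)
      have h3 : 2 * k * (βun ^ (2 / α) * ((1 + βun) * Real.log (1 + βun) * t))
          = (α * βun) * t := by rw [heq]; ring
      rw [h3] at h2
      have := (mul_lt_mul_iff_of_pos_right hβun).mp (by nlinarith : (2 * k * t ^ (2 / α) * (1 + t) *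
        Real.log (1 + t)) * βun < (α * t) * βun)
      exact this
    -- convert to the derivative inequality
    have htpow : t ^ (2 / α - 1) = t ^ (2 / α) / t := by
      rw [Real.rpow_sub ht0, Real.rpow_one]
    rw [htpow, sub_pos, lt_div_iff₀ (by positivity)]
    have hrw : k * (2 / α * (t ^ (2 / α) / t)) * ((1 + t) * Real.log (1 + t))
        = 2 * k * t ^ (2 / α) * (1 + t) * Real.log (1 + t) / (α * t) := by
      field_simp
    rw [hrw, div_lt_one (by positivity)]
    exact hkey



/-- Let W_max > 0 and ε ∈ (0, 1). Set k_max = 2·λ·κ·π·d²·(W_p/W_max)^{2/α},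
let β_un > 0 be the unique solution of α·β = k_max·β^{2/α}·(1+β)·ln(1+β), and assume
1 − exp(−α·β_un / (2·(1+β_un)·ln(1+β_un))) > ε. Set
β* = (W_max/W_p)·(−ln(1−ε)/(λ·κ·π·d²))^{α/2}. Then for every pair (W_s, β) with
0 < W_s ≤ W_max, β > 0 and outage constraint 1 − P_suc(W_s, β) ≤ ε, one has
T(W_s, β) ≤ T(W_max, β*) = (1−ε)·log₂(1 + β*). -/
theorem optimal_throughput_under_constraints
    (α lam κ d Wp Wmax kmax βun ε βstar : ℝ)
    (hα : 2 < α) (hlam : 0 < lam) (hd : 0 < d) (hWp : 0 < Wp) (hWmax : 0 < Wmax)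
    (hε : ε ∈ Set.Ioo (0 : ℝ) 1)
    (hκ : κ = Real.Gamma (1 + 2 / α) * Real.Gamma (1 - 2 / α))
    (hkmax : kmax = 2 * (lam * κ * Real.pi * d ^ 2 * (Wp / Wmax) ^ (2 / α)))
    (hβun : 0 < βun)
    (heq : α * βun = kmax * βun ^ (2 / α) * (1 + βun) * Real.log (1 + βun))
    (hout : 1 - Real.exp (-(α * βun / (2 * (1 + βun) * Real.log (1 + βun)))) > ε)
    (hβstar : βstar = (Wmax / Wp) * (-Real.log (1 - ε) / (lam * κ * Real.pi * d ^ 2)) ^ (α / 2)) :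
    (∀ Ws β : ℝ, 0 < Ws → Ws ≤ Wmax → 0 < β →
      1 - Real.exp (-(lam * κ * Real.pi * d ^ 2 * β ^ (2 / α) * (Wp / Ws) ^ (2 / α))) ≤ ε →
      Real.logb 2 (1 + β) *
          Real.exp (-(lam * κ * Real.pi * d ^ 2 * β ^ (2 / α) * (Wp / Ws) ^ (2 / α))) ≤
        Real.logb 2 (1 + βstar) *
          Real.exp (-(lam * κ * Real.pi * d ^ 2 * βstar ^ (2 / α) * (Wp / Wmax) ^ (2 / α)))) ∧
    Real.logb 2 (1 + βstar) *
        Real.exp (-(lam * κ * Real.pi * d ^ 2 * βstar ^ (2 / α) * (Wp / Wmax) ^ (2 / α))) =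
      (1 - ε) * Real.logb 2 (1 + βstar) := by
  obtain ⟨hε0, hε1⟩ := hε
  have hα0 : (0:ℝ) < α := by linarith
  have h2α : (0:ℝ) < 2 / α := by positivity
  have hκpos : 0 < κ := by
    rw [hκ]
    have h1 : (0:ℝ) < 1 + 2 / α := by positivity
    have h2 : (0:ℝ) < 1 - 2 / α := by
      have : 2 / α < 1 := (div_lt_one hα0).mpr (by linarith)
      linarith
    exact mul_pos (Real.Gamma_pos_of_pos h1) (Real.Gamma_pos_of_pos h2)
  set c := lam * κ * Real.pi * d ^ 2 with hcdef
  have hc : 0 < c := by rw [hcdef]; positivity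
  set k := c * (Wp / Wmax) ^ (2 / α) with hkdef
  have hk : 0 < k := by rw [hkdef]; positivity
  have h1ε : (0:ℝ) < 1 - ε := by linarith
  have hlogε : Real.log (1 - ε) < 0 := Real.log_neg h1ε (by linarith)
  have hX : (0:ℝ) < -Real.log (1 - ε) / c := div_pos (by linarith) hc
  have hβstarpos : 0 < βstar := by
    rw [hβstar]
    exact mul_pos (div_pos hWmax hWp) (Real.rpow_pos_of_pos hX _)
  -- key algebraic identity : k * βstar ^ (2/α) = -log(1-ε)
  have hks : k * βstar ^ (2 / α) = -Real.log (1 - ε) := by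
    rw [hβstar, Real.mul_rpow (by positivity) (Real.rpow_nonneg hX.le _),
      ← Real.rpow_mul hX.le]
    have hαα : α / 2 * (2 / α) = 1 := by field_simp
    rw [hαα, Real.rpow_one, hkdef]
    rw [show c * (Wp / Wmax) ^ (2 / α) * ((Wmax / Wp) ^ (2 / α) * (-Real.log (1 - ε) / c))
        = ((Wp / Wmax) * (Wmax / Wp)) ^ (2 / α) * (c * (-Real.log (1 - ε) / c)) from by
      rw [Real.mul_rpow (by positivity) (by positivity)]; ring]
    rw [show Wp / Wmax * (Wmax / Wp) = 1 from by field_simp]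
    rw [Real.one_rpow, one_mul, mul_div_cancel₀ _ hc.ne']
  have heq' : α * βun = 2 * k * βun ^ (2 / α) * (1 + βun) * Real.log (1 + βun) := by
    rw [hkmax] at heq
    linear_combination heq
  have hLu : 0 < Real.log (1 + βun) := Real.log_pos (by linarith)
  -- βstar < βun
  have hkBu : k * βun ^ (2 / α) = α * βun / (2 * (1 + βun) * Real.log (1 + βun)) := by
    rw [eq_div_iff (by positivity)]
    linear_combination -heq'
  have hβstar_lt : βstar < βun := by
    have h1 : Real.exp (-(k * βun ^ (2 / α))) < 1 - ε := by
      rw [hkBu]; linarith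
    have h2 : -(k * βun ^ (2 / α)) < Real.log (1 - ε) := by
      have h2' := Real.log_lt_log (Real.exp_pos _) h1
      rwa [Real.log_exp] at h2'
    have h3 : k * βstar ^ (2 / α) < k * βun ^ (2 / α) := by rw [hks]; linarith
    have h4 : βstar ^ (2 / α) < βun ^ (2 / α) := lt_of_mul_lt_mul_left h3 hk.le
    exact (Real.rpow_lt_rpow_iff hβstarpos.le hβun.le h2α).mp h4
  have hβstarIoc : βstar ∈ Set.Ioc 0 βun := ⟨hβstarpos, hβstar_lt.le⟩
  have hrhs : c * βstar ^ (2 / α) * (Wp / Wmax) ^ (2 / α) = k * βstar ^ (2 / α) := by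
    rw [hkdef]; ring
  constructor
  · intro Ws β hWs hWsle hβ hcon
    have hcon' : 1 - ε ≤ Real.exp (-(c * β ^ (2 / α) * (Wp / Ws) ^ (2 / α))) := by linarith
    have hxle : c * β ^ (2 / α) * (Wp / Ws) ^ (2 / α) ≤ -Real.log (1 - ε) := by
      have := (Real.log_le_log_iff h1ε (Real.exp_pos _)).mpr hcon'
      rw [Real.log_exp] at this
      linarith
    have hWfrac : (Wp / Wmax) ^ (2 / α) ≤ (Wp / Ws) ^ (2 / α) := by
      apply Real.rpow_le_rpow (by positivity) _ h2α.le
      exact div_le_div_of_nonneg_left hWp.le hWs hWsle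
    have hxk : k * β ^ (2 / α) ≤ c * β ^ (2 / α) * (Wp / Ws) ^ (2 / α) := by
      have h5 : c * β ^ (2 / α) * (Wp / Wmax) ^ (2 / α) ≤ c * β ^ (2 / α) * (Wp / Ws) ^ (2 / α) :=
        mul_le_mul_of_nonneg_left hWfrac (by positivity)
      calc k * β ^ (2 / α) = c * β ^ (2 / α) * (Wp / Wmax) ^ (2 / α) := by rw [hkdef]; ring
        _ ≤ _ := h5
    have hβle : β ≤ βstar := by
      have h6 : k * β ^ (2 / α) ≤ k * βstar ^ (2 / α) := by rw [hks]; linarith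
      have h7 : β ^ (2 / α) ≤ βstar ^ (2 / α) := le_of_mul_le_mul_left h6 hk
      exact (Real.rpow_le_rpow_iff hβ.le hβstarpos.le h2α).mp h7
    have hβIoc : β ∈ Set.Ioc 0 βun := ⟨hβ, hβle.trans hβstar_lt.le⟩
    have hFmono := (Fmono α k βun hα hk hβun heq').monotoneOn hβIoc hβstarIoc hβle
    have hexp : Real.log (1 + β) * Real.exp (-(k * β ^ (2 / α)))
        ≤ Real.log (1 + βstar) * Real.exp (-(k * βstar ^ (2 / α))) := by
      have h8 := Real.exp_le_exp.mpr hFmono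
      rwa [sub_eq_add_neg, sub_eq_add_neg, Real.exp_add, Real.exp_add,
        Real.exp_log (Real.log_pos (by linarith)),
        Real.exp_log (Real.log_pos (by linarith))] at h8
    have hlog2 : (0:ℝ) < Real.log 2 := Real.log_pos one_lt_two
    calc Real.logb 2 (1 + β) * Real.exp (-(c * β ^ (2 / α) * (Wp / Ws) ^ (2 / α)))
        ≤ Real.logb 2 (1 + β) * Real.exp (-(k * β ^ (2 / α))) := by
          apply mul_le_mul_of_nonneg_left (Real.exp_le_exp.mpr (by linarith))
          exact Real.logb_nonneg one_lt_two (by linarith)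
      _ ≤ Real.logb 2 (1 + βstar) * Real.exp (-(k * βstar ^ (2 / α))) := by
          simp only [Real.logb, div_mul_eq_mul_div]
          exact (div_le_div_iff_of_pos_right hlog2).mpr hexp
      _ = Real.logb 2 (1 + βstar) *
            Real.exp (-(c * βstar ^ (2 / α) * (Wp / Wmax) ^ (2 / α))) := by rw [hrhs]
  · rw [hrhs, hks, neg_neg, Real.exp_log h1ε, mul_comm]
end
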